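/- The function f, defined on the set of N×M real matrices whose columns all have Euclidean norm 1 by f(Φ) = inf{‖I_N − Σ_{i=1}^M c_i φ_i φ_iᵀ‖₂ : c ∈ ℝ^M, c_i ≥ 0 for all i} (where φ_1, …, φ_M are the columns of Φ), is continuous with respect to Φ. -/

import Mathlib

open Matrix


/-- The ℓ²→ℓ² operator norm (largest singular value) of a square real matrix. -/
noncomputable def opNorm {N : ℕ} (A : Matrix (Fin N) (Fin N) ℝ) : ℝ :=
  ‖(Matrix.toEuclideanCLM (𝕜 := ℝ) A : EuclideanSpace ℝ (Fin N) →L[ℝ] EuclideanSpace ℝ (Fin N))‖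

/-- `frameOp φ c = ∑ i, c i • φ i φ iᵀ`. -/
noncomputable def frameOp {N M : ℕ} (φ : Fin M → (Fin N → ℝ)) (c : Fin M → ℝ) :
    Matrix (Fin N) (Fin N) ℝ :=
  ∑ i, c i • Matrix.vecMulVec (φ i) (φ i)

noncomputable def e2 {N : ℕ} (x : Fin N → ℝ) : EuclideanSpace ℝ (Fin N) := (WithLp.equiv 2 _).symm x

lemma clm_apply {N : ℕ} (A : Matrix (Fin N) (Fin N) ℝ) (x : Fin N → ℝ) :
    Matrix.toEuclideanCLM (𝕜 := ℝ) A (e2 x) = e2 (A *ᵥ x) := by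
  simp [e2, Matrix.toLin'_apply]

lemma e2_norm_sq {N : ℕ} (x : Fin N → ℝ) : ‖e2 x‖ ^ 2 = ∑ k, x k ^ 2 := by
  rw [EuclideanSpace.norm_eq, Real.sq_sqrt (by positivity)]
  simp [e2, sq_abs]

lemma e2_norm {N : ℕ} (x : Fin N → ℝ) : ‖e2 x‖ = Real.sqrt (∑ k, x k ^ 2) := by
  rw [← e2_norm_sq, Real.sqrt_sq (norm_nonneg _)]

lemma opNorm_nonneg' {N : ℕ} (A : Matrix (Fin N) (Fin N) ℝ) : 0 ≤ opNorm A := norm_nonneg _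

lemma opNorm_one_le {N : ℕ} : opNorm (1 : Matrix (Fin N) (Fin N) ℝ) ≤ 1 := by
  rw [opNorm, _root_.map_one]; exact ContinuousLinearMap.norm_id_le

lemma opNorm_sub_le' {N : ℕ} (A B : Matrix (Fin N) (Fin N) ℝ) :
    opNorm A ≤ opNorm B + opNorm (A - B) := by
  have h : Matrix.toEuclideanCLM (𝕜 := ℝ) A
      = Matrix.toEuclideanCLM (𝕜 := ℝ) B + Matrix.toEuclideanCLM (𝕜 := ℝ) (A - B) := by
    rw [← _root_.map_add]; congr 1; abel
  rw [opNorm, h]; exact norm_add_le _ _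

lemma opNorm_sum_le {N : ℕ} {ι : Type*} (s : Finset ι) (A : ι → Matrix (Fin N) (Fin N) ℝ) :
    opNorm (∑ i ∈ s, A i) ≤ ∑ i ∈ s, opNorm (A i) := by
  rw [opNorm, _root_.map_sum]
  exact norm_sum_le _ _

lemma smul_vecMulVec {N : ℕ} (r : ℝ) (a b : Fin N → ℝ) :
    r • Matrix.vecMulVec a b = Matrix.vecMulVec (r • a) b := by
  ext k l; simp [Matrix.vecMulVec_apply, mul_assoc]

lemma vecMulVec_mulVec' {N : ℕ} (a b x : Fin N → ℝ) :
    Matrix.vecMulVec a b *ᵥ x = (b ⬝ᵥ x) • a := by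
  ext k
  simp [Matrix.mulVec, Matrix.vecMulVec, dotProduct, Finset.sum_mul, Finset.mul_sum,
    mul_comm, mul_assoc, mul_left_comm]

lemma opNorm_vecMulVec_le {N : ℕ} (a b : Fin N → ℝ) :
    opNorm (Matrix.vecMulVec a b) ≤ ‖e2 a‖ * ‖e2 b‖ := by
  apply ContinuousLinearMap.opNorm_le_bound _ (by positivity)
  intro x
  have hx : x = e2 (WithLp.equiv 2 _ x) := rfl
  rw [hx, clm_apply, vecMulVec_mulVec']
  have he : e2 ((b ⬝ᵥ (WithLp.equiv 2 _ x)) • a) = (b ⬝ᵥ (WithLp.equiv 2 _ x)) • e2 a := rfl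
  rw [he, norm_smul, Real.norm_eq_abs]
  have hd : b ⬝ᵥ (WithLp.equiv 2 _ x) = (inner ℝ (e2 b) x : ℝ) := by
    simp [e2, PiLp.inner_apply, RCLike.inner_apply, dotProduct, mul_comm]
  calc |b ⬝ᵥ (WithLp.equiv 2 _ x)| * ‖e2 a‖ ≤ (‖e2 b‖ * ‖x‖) * ‖e2 a‖ := by
        apply mul_le_mul_of_nonneg_right _ (norm_nonneg _)
        rw [hd]; exact abs_real_inner_le_norm _ _
    _ = ‖e2 a‖ * ‖e2 b‖ * ‖x‖ := by ring

lemma quad_le {N : ℕ} (A : Matrix (Fin N) (Fin N) ℝ) (x : Fin N → ℝ) :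
    x ⬝ᵥ (A *ᵥ x) ≤ opNorm A * (∑ k, x k ^ 2) := by
  have h1 : x ⬝ᵥ (A *ᵥ x) = (inner ℝ (e2 x) (e2 (A *ᵥ x)) : ℝ) := by
    simp [e2, PiLp.inner_apply, RCLike.inner_apply, dotProduct, mul_comm]
  rw [h1, ← clm_apply]
  calc (inner ℝ (e2 x) (Matrix.toEuclideanCLM (𝕜 := ℝ) A (e2 x)) : ℝ)
      ≤ ‖e2 x‖ * ‖Matrix.toEuclideanCLM (𝕜 := ℝ) A (e2 x)‖ := real_inner_le_norm _ _
    _ ≤ ‖e2 x‖ * (opNorm A * ‖e2 x‖) := by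
        apply mul_le_mul_of_nonneg_left (ContinuousLinearMap.le_opNorm _ _) (norm_nonneg _)
    _ = opNorm A * ‖e2 x‖ ^ 2 := by ring
    _ = opNorm A * (∑ k, x k ^ 2) := by rw [e2_norm_sq]

lemma sum_mulVec' {N : ℕ} {ι : Type*} (s : Finset ι) (A : ι → Matrix (Fin N) (Fin N) ℝ)
    (x : Fin N → ℝ) : (∑ i ∈ s, A i) *ᵥ x = ∑ i ∈ s, A i *ᵥ x := by
  ext k
  simp [Matrix.mulVec, dotProduct, Finset.sum_apply, Finset.sum_mul, Matrix.sum_apply]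
  rw [Finset.sum_comm]

lemma frameOp_quad {N M : ℕ} (φ : Fin M → (Fin N → ℝ)) (c : Fin M → ℝ) (x : Fin N → ℝ) :
    x ⬝ᵥ (frameOp φ c *ᵥ x) = ∑ j, c j * (φ j ⬝ᵥ x) ^ 2 := by
  rw [frameOp, sum_mulVec']
  have hds : x ⬝ᵥ (∑ i, (c i • Matrix.vecMulVec (φ i) (φ i)) *ᵥ x)
      = ∑ i, x ⬝ᵥ ((c i • Matrix.vecMulVec (φ i) (φ i)) *ᵥ x) := by
    simp [dotProduct, Finset.sum_apply, Finset.mul_sum]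
    rw [Finset.sum_comm]
  rw [hds]
  apply Finset.sum_congr rfl
  intro j _
  rw [Matrix.smul_mulVec, vecMulVec_mulVec', dotProduct_smul, dotProduct_smul]
  have : x ⬝ᵥ φ j = φ j ⬝ᵥ x := dotProduct_comm _ _
  simp only [this, smul_eq_mul]; ring

lemma vecMulVec_sub_decomp {N : ℕ} (a b : Fin N → ℝ) :
    Matrix.vecMulVec a a - Matrix.vecMulVec b b
      = Matrix.vecMulVec a (a - b) + Matrix.vecMulVec (a - b) b := by
  ext k l; simp [Matrix.vecMulVec_apply]; ring

lemma opNorm_sub_comm {N : ℕ} (A B : Matrix (Fin N) (Fin N) ℝ) :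
    opNorm (A - B) = opNorm (B - A) := by
  rw [opNorm, opNorm, show A - B = -(B - A) by abel, _root_.map_neg, norm_neg]

lemma e2_smul {N : ℕ} (r : ℝ) (x : Fin N → ℝ) : e2 (r • x) = r • e2 x := rfl

lemma e2_norm_one {N : ℕ} {x : Fin N → ℝ} (h : ∑ k, x k ^ 2 = 1) : ‖e2 x‖ = 1 := by
  rw [e2_norm, h, Real.sqrt_one]

section Key
variable {N M : ℕ}

noncomputable def fval (φ : Fin M → (Fin N → ℝ)) : ℝ :=
  sInf {r : ℝ | ∃ c : Fin M → ℝ, (∀ i, 0 ≤ c i) ∧ r = opNorm (1 - frameOp φ c)}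

lemma fS_mem (φ : Fin M → (Fin N → ℝ)) (c : Fin M → ℝ) (hc : ∀ i, 0 ≤ c i) :
    opNorm (1 - frameOp φ c) ∈
      {r : ℝ | ∃ c : Fin M → ℝ, (∀ i, 0 ≤ c i) ∧ r = opNorm (1 - frameOp φ c)} :=
  ⟨c, hc, rfl⟩

lemma fS_nonempty (φ : Fin M → (Fin N → ℝ)) :
    Set.Nonempty {r : ℝ | ∃ c : Fin M → ℝ, (∀ i, 0 ≤ c i) ∧ r = opNorm (1 - frameOp φ c)} :=
  ⟨_, fS_mem φ 0 (fun _ => le_refl 0)⟩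

lemma fS_bdd (φ : Fin M → (Fin N → ℝ)) :
    BddBelow {r : ℝ | ∃ c : Fin M → ℝ, (∀ i, 0 ≤ c i) ∧ r = opNorm (1 - frameOp φ c)} :=
  ⟨0, fun r hr => by obtain ⟨c, _, rfl⟩ := hr; exact opNorm_nonneg' _⟩

lemma fval_le (φ : Fin M → (Fin N → ℝ)) (c : Fin M → ℝ) (hc : ∀ i, 0 ≤ c i) :
    fval φ ≤ opNorm (1 - frameOp φ c) :=
  csInf_le (fS_bdd φ) (fS_mem φ c hc)

lemma fval_le_one (φ : Fin M → (Fin N → ℝ)) : fval φ ≤ 1 := by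
  have h := fval_le φ 0 (fun _ => le_refl 0)
  have h0 : frameOp φ (0 : Fin M → ℝ) = 0 := by simp [frameOp]
  rw [h0, sub_zero] at h
  exact h.trans opNorm_one_le

lemma key (φ ψ : Fin M → (Fin N → ℝ)) (hφ : ∀ i, ∑ k, (φ i k) ^ 2 = 1)
    (hψ : ∀ i, ∑ k, (ψ i k) ^ 2 = 1) (ε : ℝ) (hε : 0 < ε) (D : ℝ) (hD0 : 0 ≤ D)
    (hD : ∀ i, ‖e2 (φ i - ψ i)‖ ≤ D) :
    fval ψ ≤ fval φ + ε + M * ((2 + ε) * (2 * D)) := by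
  obtain ⟨r, hrS, hrlt⟩ := Real.lt_sInf_add_pos (fS_nonempty φ) hε
  obtain ⟨c, hc, rfl⟩ := hrS
  -- opNorm bound on frameOp φ c
  have hfr : opNorm (frameOp φ c) < 2 + ε := by
    have h1 := opNorm_sub_le' (frameOp φ c) (1 : Matrix (Fin N) (Fin N) ℝ)
    rw [opNorm_sub_comm] at h1
    have := fval_le_one φ
    have hcl : opNorm (1 - frameOp φ c) < fval φ + ε := hrlt
    calc opNorm (frameOp φ c) ≤ opNorm (1 : Matrix (Fin N) (Fin N) ℝ)
          + opNorm (1 - frameOp φ c) := h1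
      _ < 1 + (fval φ + ε) := by
          have := opNorm_one_le (N := N); linarith
      _ ≤ 2 + ε := by linarith
  -- coefficient bound
  have hcb : ∀ i, c i ≤ 2 + ε := by
    intro i
    have hq := quad_le (frameOp φ c) (φ i)
    rw [frameOp_quad, hφ i, mul_one] at hq
    have hsingle : c i ≤ ∑ j, c j * (φ j ⬝ᵥ φ i) ^ 2 := by
      have hterm : c i * (φ i ⬝ᵥ φ i) ^ 2 = c i := by
        have : φ i ⬝ᵥ φ i = 1 := by
          rw [dotProduct]
          rw [← hφ i]
          exact Finset.sum_congr rfl (fun k _ => (sq (φ i k)).symm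
            ▸ by ring)
        rw [this]; ring
      calc c i = c i * (φ i ⬝ᵥ φ i) ^ 2 := hterm.symm
        _ ≤ ∑ j, c j * (φ j ⬝ᵥ φ i) ^ 2 :=
          Finset.single_le_sum (f := fun j => c j * (φ j ⬝ᵥ φ i) ^ 2)
            (fun j _ => mul_nonneg (hc j) (sq_nonneg _)) (Finset.mem_univ i)
    linarith [hsingle.trans hq, hfr.le]
  -- difference bound
  have hdiff : opNorm (frameOp φ c - frameOp ψ c) ≤ M * ((2 + ε) * (2 * D)) := by
    have heq : frameOp φ c - frameOp ψ c
        = ∑ i, (Matrix.vecMulVec (c i • φ i) (φ i - ψ i)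
            + Matrix.vecMulVec (c i • (φ i - ψ i)) (ψ i)) := by
      rw [frameOp, frameOp, ← Finset.sum_sub_distrib]
      apply Finset.sum_congr rfl
      intro i _
      rw [← smul_sub, vecMulVec_sub_decomp, smul_add, smul_vecMulVec, smul_vecMulVec]
    rw [heq]
    calc opNorm _ ≤ ∑ i : Fin M, opNorm (Matrix.vecMulVec (c i • φ i) (φ i - ψ i)
            + Matrix.vecMulVec (c i • (φ i - ψ i)) (ψ i)) := opNorm_sum_le _ _
      _ ≤ ∑ _i : Fin M, (2 + ε) * (2 * D) := by
          apply Finset.sum_le_sum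
          intro i _
          have h1 : opNorm (Matrix.vecMulVec (c i • φ i) (φ i - ψ i)
              + Matrix.vecMulVec (c i • (φ i - ψ i)) (ψ i))
              ≤ ‖e2 (c i • φ i)‖ * ‖e2 (φ i - ψ i)‖
                + ‖e2 (c i • (φ i - ψ i))‖ * ‖e2 (ψ i)‖ := by
            have ht := opNorm_sub_le' (Matrix.vecMulVec (c i • φ i) (φ i - ψ i)
              + Matrix.vecMulVec (c i • (φ i - ψ i)) (ψ i))
              (Matrix.vecMulVec (c i • φ i) (φ i - ψ i))
            rw [add_sub_cancel_left] at ht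
            exact ht.trans (add_le_add (opNorm_vecMulVec_le _ _) (opNorm_vecMulVec_le _ _))
          have e1 : ‖e2 (c i • φ i)‖ = c i := by
            rw [e2_smul, norm_smul, Real.norm_eq_abs, abs_of_nonneg (hc i),
              e2_norm_one (hφ i), mul_one]
          have e2' : ‖e2 (c i • (φ i - ψ i))‖ = c i * ‖e2 (φ i - ψ i)‖ := by
            rw [e2_smul, norm_smul, Real.norm_eq_abs, abs_of_nonneg (hc i)]
          have e3 : ‖e2 (ψ i)‖ = 1 := e2_norm_one (hψ i)
          rw [e1, e2', e3] at h1
          have hDi := hD i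
          have hn : (0:ℝ) ≤ ‖e2 (φ i - ψ i)‖ := norm_nonneg _
          have := hcb i
          nlinarith [hc i]
      _ = M * ((2 + ε) * (2 * D)) := by simp [Finset.sum_const, mul_comm]
  -- conclude
  have hstep : fval ψ ≤ opNorm (1 - frameOp ψ c) := fval_le ψ c hc
  have htri : opNorm (1 - frameOp ψ c)
      ≤ opNorm (1 - frameOp φ c) + opNorm (frameOp φ c - frameOp ψ c) := by
    have h := opNorm_sub_le' (1 - frameOp ψ c) (1 - frameOp φ c)
    have : (1 - frameOp ψ c) - (1 - frameOp φ c) = frameOp φ c - frameOp ψ c := by abel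
    rwa [this] at h
  have hrlt2 : opNorm (1 - frameOp φ c) < fval φ + ε := hrlt
  linarith
end Key

lemma e2_dist_bound {N M : ℕ} (χ₁ χ₂ : Fin M → (Fin N → ℝ)) (i : Fin M) :
    ‖e2 (χ₁ i - χ₂ i)‖ ≤ Real.sqrt N * dist χ₁ χ₂ := by
  rw [e2_norm]
  have hd : ∀ k, (χ₁ i k - χ₂ i k) ^ 2 ≤ dist χ₁ χ₂ ^ 2 := by
    intro k
    have h1 : |χ₁ i k - χ₂ i k| ≤ dist χ₁ χ₂ := by
      rw [← Real.dist_eq]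
      exact (dist_le_pi_dist (χ₁ i) (χ₂ i) k).trans (dist_le_pi_dist χ₁ χ₂ i)
    have := abs_le.mp h1
    nlinarith [abs_nonneg (χ₁ i k - χ₂ i k)]
  calc Real.sqrt (∑ k, (χ₁ i k - χ₂ i k) ^ 2)
      ≤ Real.sqrt (∑ _k : Fin N, dist χ₁ χ₂ ^ 2) :=
        Real.sqrt_le_sqrt (Finset.sum_le_sum (fun k _ => hd k))
    _ = Real.sqrt N * dist χ₁ χ₂ := by
        rw [Finset.sum_const, Finset.card_fin, nsmul_eq_mul, Real.sqrt_mul (Nat.cast_nonneg N),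
          Real.sqrt_sq dist_nonneg]

/-- on `N×M` matrices (identified with the `M`-tuple of their columns in
`ℝ^N`) whose columns all have Euclidean norm `1`, the function
`f(Φ) = inf {‖I - ∑ c_i φ_i φ_iᵀ‖₂ : c ≥ 0}` is continuous. -/
theorem stmt_12 (N M : ℕ) :
    ContinuousOn
      (fun φ : Fin M → (Fin N → ℝ) =>
        sInf {r : ℝ | ∃ c : Fin M → ℝ, (∀ i, 0 ≤ c i) ∧ r = opNorm (1 - frameOp φ c)})
      {φ : Fin M → (Fin N → ℝ) | ∀ i, ∑ k, (φ i k) ^ 2 = 1} := by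
  have hfe : (fun φ : Fin M → (Fin N → ℝ) =>
      sInf {r : ℝ | ∃ c : Fin M → ℝ, (∀ i, 0 ≤ c i) ∧ r = opNorm (1 - frameOp φ c)})
      = fval := rfl
  rw [hfe]
  intro φ₀ hφ₀
  rw [Metric.continuousWithinAt_iff]
  intro ε hε
  set K := (M : ℝ) * ((2 + ε / 2) * (2 * Real.sqrt N)) with hKdef
  have hK0 : 0 ≤ K := by positivity
  refine ⟨(ε / 2) / (K + 1), by positivity, ?_⟩
  intro ψ hψ hdist
  set d := dist ψ φ₀ with hddef
  have hd0 : 0 ≤ d := dist_nonneg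
  set D := Real.sqrt N * d with hDdef
  have hD0 : 0 ≤ D := by positivity
  have hD1 : ∀ i, ‖e2 (φ₀ i - ψ i)‖ ≤ D := by
    intro i
    have := e2_dist_bound φ₀ ψ i
    rwa [dist_comm φ₀ ψ, ← hddef] at this
  have hD2 : ∀ i, ‖e2 (ψ i - φ₀ i)‖ ≤ D := fun i => e2_dist_bound ψ φ₀ i
  have hk1 := key φ₀ ψ hφ₀ hψ (ε / 2) (by linarith) D hD0 hD1
  have hk2 := key ψ φ₀ hψ hφ₀ (ε / 2) (by linarith) D hD0 hD2
  have hKd : (M : ℝ) * ((2 + ε / 2) * (2 * D)) < ε / 2 := by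
    have heq : (M : ℝ) * ((2 + ε / 2) * (2 * D)) = K * d := by
      rw [hDdef, hKdef]; ring
    rw [heq]
    have h1 : K * d ≤ K * ((ε / 2) / (K + 1)) :=
      mul_le_mul_of_nonneg_left hdist.le hK0
    have h2 : K * ((ε / 2) / (K + 1)) < ε / 2 := by
      rw [mul_div_assoc', div_lt_iff₀ (by positivity : (0:ℝ) < K + 1)]
      nlinarith
    linarith
  rw [Real.dist_eq, abs_sub_lt_iff]
  constructor <;> linarith
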